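/- arXiv:math/0411186 — 2 statements merged into one kernel-verified Lean document; each statement's English description precedes it below -/
import Mathlib

section
/- Let u : G → ℂ and let (φ_i)_{i∈ℕ}, (ψ_i)_{i∈ℕ} be sequences of measurable functions G → ℂ for which there exists C > 0 with Σ_i |φ_i(x)|² ≤ C and Σ_i |ψ_i(x)|² ≤ C for every x ∈ G, and such that u(x·y⁻¹) = Σ_i φ_i(x)·ψ_i(y) for all x, y ∈ G. Then for every s ∈ G and every f ∈ L²(G,μ), the series Σ_i φ_i · (λ(s)(ψ_i · f)) converges in L²(G,μ) and its sum equals u(s) · λ(s)f. (This says that the operator Σ_i M_{φ_i} λ(s) M_{ψ_i}, with the sum converging strongly, equals u(s)·λ(s).) -/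
open MeasureTheory Filter Finset Topology
open scoped ENNReal NNReal

lemma stmt1_core {G : Type*} [MeasurableSpace G] (μ : Measure G)
    (c : ℂ) (φ ψ' : ℕ → G → ℂ) (F : G → ℂ)
    (hφm : ∀ i, Measurable (φ i)) (hψm : ∀ i, Measurable (ψ' i))
    (hFm : Measurable F) (hF2 : MemLp F 2 μ)
    (C : ℝ) (hC : 0 < C)
    (hφsum : ∀ x, Summable fun i => ‖φ i x‖ ^ 2)
    (hψsum : ∀ x, Summable fun i => ‖ψ' i x‖ ^ 2)
    (hφb : ∀ x, (∑' i, ‖φ i x‖ ^ 2) ≤ C) (hψb : ∀ x, (∑' i, ‖ψ' i x‖ ^ 2) ≤ C)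
    (hps : ∀ t, HasSum (fun i => φ i t * ψ' i t) c) :
    ∃ (hg : ∀ i, MemLp (fun t => φ i t * (ψ' i t * F t)) 2 μ)
      (hh : MemLp (fun t => c * F t) 2 μ),
      HasSum (fun i => (hg i).toLp _) (hh.toLp _) := by
  classical
  have hCs : Real.sqrt C * Real.sqrt C = C := Real.mul_self_sqrt hC.le
  have hφle : ∀ i x, ‖φ i x‖ ≤ Real.sqrt C := by
    intro i x
    have h1 : ‖φ i x‖ ^ 2 ≤ C :=
      le_trans (Summable.le_tsum (hφsum x) i fun j _ => sq_nonneg _) (hφb x)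
    have h2 := Real.sqrt_le_sqrt h1
    rwa [Real.sqrt_sq (norm_nonneg _)] at h2
  have hψle : ∀ i x, ‖ψ' i x‖ ≤ Real.sqrt C := by
    intro i x
    have h1 : ‖ψ' i x‖ ^ 2 ≤ C :=
      le_trans (Summable.le_tsum (hψsum x) i fun j _ => sq_nonneg _) (hψb x)
    have h2 := Real.sqrt_le_sqrt h1
    rwa [Real.sqrt_sq (norm_nonneg _)] at h2
  have hgm : ∀ i, Measurable (fun t => φ i t * (ψ' i t * F t)) := fun i =>
    (hφm i).mul ((hψm i).mul hFm)
  -- membership in L²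
  have hgmem : ∀ i, MemLp (fun t => φ i t * (ψ' i t * F t)) 2 μ := by
    intro i
    refine MemLp.of_le (hF2.const_mul (C : ℂ)) (hgm i).aestronglyMeasurable
      (Eventually.of_forall fun t => ?_)
    have h1 : ‖φ i t * (ψ' i t * F t)‖ = ‖φ i t‖ * (‖ψ' i t‖ * ‖F t‖) := by
      simp [norm_mul]
    rw [h1]
    have h2 : ‖φ i t‖ * (‖ψ' i t‖ * ‖F t‖) ≤ Real.sqrt C * (Real.sqrt C * ‖F t‖) := by
      have := hφle i t; have := hψle i t
      gcongr <;> positivity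
    calc ‖φ i t‖ * (‖ψ' i t‖ * ‖F t‖) ≤ Real.sqrt C * (Real.sqrt C * ‖F t‖) := h2
      _ = C * ‖F t‖ := by rw [← mul_assoc, hCs]
      _ ≤ ‖(C : ℂ) * F t‖ := by
          rw [norm_mul, Complex.norm_real, Real.norm_eq_abs, abs_of_pos hC]
  have hhmem : MemLp (fun t => c * F t) 2 μ := hF2.const_mul c
  refine ⟨hgmem, hhmem, ?_⟩
  -- pointwise Cauchy–Schwarz type bounds
  have hprod_sum : ∀ t, Summable fun i => ‖φ i t‖ * ‖ψ' i t‖ := by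
    intro t
    refine Summable.of_nonneg_of_le (fun i => by positivity) (fun i => ?_)
      ((hφsum t).add (hψsum t))
    nlinarith [sq_nonneg (‖φ i t‖ - ‖ψ' i t‖), norm_nonneg (φ i t), norm_nonneg (ψ' i t)]
  have hprod_le : ∀ t, (∑' i, ‖φ i t‖ * ‖ψ' i t‖) ≤ C := by
    intro t
    calc (∑' i, ‖φ i t‖ * ‖ψ' i t‖)
        ≤ ∑' i, (‖φ i t‖ ^ 2 + ‖ψ' i t‖ ^ 2) / 2 := by
          refine Summable.tsum_le_tsum (fun i => ?_) (hprod_sum t)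
            (((hφsum t).add (hψsum t)).div_const 2)
          nlinarith [sq_nonneg (‖φ i t‖ - ‖ψ' i t‖)]
      _ = ((∑' i, ‖φ i t‖ ^ 2) + ∑' i, ‖ψ' i t‖ ^ 2) / 2 := by
          rw [tsum_div_const, Summable.tsum_add (hφsum t) (hψsum t)]
      _ ≤ (C + C) / 2 := by
          have := hφb t; have := hψb t; linarith
      _ = C := by ring
  have hgnorm : ∀ t, Summable fun i => ‖φ i t * (ψ' i t * F t)‖ := by
    intro t
    have := (hprod_sum t).mul_right ‖F t‖
    refine this.congr fun i => ?_
    simp [norm_mul]; ring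
  have hpsg : ∀ t, HasSum (fun i => φ i t * (ψ' i t * F t)) (c * F t) := by
    intro t
    simpa [mul_assoc] using (hps t).mul_right (F t)
  -- uniform tail bound
  have htail : ∀ (N : Finset ℕ) (t : G),
      ‖(∑ i ∈ N, φ i t * (ψ' i t * F t)) - c * F t‖ ≤ C * ‖F t‖ := by
    intro N t
    have hsm : Summable fun i => φ i t * (ψ' i t * F t) := (hpsg t).summable
    have hEq : c * F t - ∑ i ∈ N, φ i t * (ψ' i t * F t)
        = ∑' i : ↑(↑N : Set ℕ)ᶜ, φ i t * (ψ' i t * F t) := by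
      have h0 := Summable.sum_add_tsum_compl (s := N) hsm
      rw [(hpsg t).tsum_eq] at h0
      rw [sub_eq_iff_eq_add']
      exact h0.symm
    rw [norm_sub_rev, hEq]
    calc ‖∑' i : ↑(↑N : Set ℕ)ᶜ, φ i t * (ψ' i t * F t)‖
        ≤ ∑' i : ↑(↑N : Set ℕ)ᶜ, ‖φ i t * (ψ' i t * F t)‖ :=
          norm_tsum_le_tsum_norm ((hgnorm t).subtype _)
      _ ≤ ∑' i, ‖φ i t * (ψ' i t * F t)‖ :=
          Summable.tsum_subtype_le _ _ (fun i => norm_nonneg _) (hgnorm t)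
      _ = (∑' i, ‖φ i t‖ * ‖ψ' i t‖) * ‖F t‖ := by
          rw [← tsum_mul_right]
          exact tsum_congr fun i => by simp [norm_mul]; ring
      _ ≤ C * ‖F t‖ :=
          mul_le_mul_of_nonneg_right (hprod_le t) (norm_nonneg _)
  -- dominated convergence in L²
  have hΦmeas : ∀ N : Finset ℕ, Measurable fun t =>
      (‖(∑ i ∈ N, φ i t * (ψ' i t * F t)) - c * F t‖₊ : ℝ≥0∞) ^ (2:ℝ) := by
    intro N
    exact (((Finset.measurable_sum N fun i _ => hgm i).sub
      (measurable_const.mul hFm)).nnnorm.coe_nnreal_ennreal).pow_const _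
  have hbound_int : ∫⁻ t, (ENNReal.ofReal C * (‖F t‖₊ : ℝ≥0∞)) ^ (2:ℝ) ∂μ ≠ ∞ := by
    have h1 : ∀ t : G, (ENNReal.ofReal C * (‖F t‖₊ : ℝ≥0∞)) ^ (2:ℝ)
        = ENNReal.ofReal C ^ (2:ℝ) * (‖F t‖₊ : ℝ≥0∞) ^ (2:ℝ) := fun t =>
      ENNReal.mul_rpow_of_nonneg _ _ (by norm_num)
    simp only [h1]
    rw [lintegral_const_mul _ (hFm.nnnorm.coe_nnreal_ennreal.pow_const _)]
    have h2 : ∫⁻ t, (‖F t‖₊ : ℝ≥0∞) ^ (2:ℝ) ∂μ < ∞ := by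
      have := lintegral_rpow_enorm_lt_top_of_eLpNorm_lt_top (f := F) (μ := μ) (p := 2)
        (by norm_num) (by norm_num) hF2.2
      simpa [enorm_eq_nnnorm] using this
    exact (ENNReal.mul_lt_top
      (ENNReal.rpow_lt_top_of_nonneg (by norm_num) ENNReal.ofReal_ne_top) h2).ne
  have hbd : ∀ N : Finset ℕ, ∀ t : G,
      (‖(∑ i ∈ N, φ i t * (ψ' i t * F t)) - c * F t‖₊ : ℝ≥0∞) ^ (2:ℝ)
        ≤ (ENNReal.ofReal C * (‖F t‖₊ : ℝ≥0∞)) ^ (2:ℝ) := by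
    intro N t
    refine ENNReal.rpow_le_rpow ?_ (by norm_num)
    rw [← enorm_eq_nnnorm, ← enorm_eq_nnnorm, ← ofReal_norm, ← ofReal_norm,
      ← ENNReal.ofReal_mul hC.le]
    exact ENNReal.ofReal_le_ofReal (htail N t)
  have hlim : ∀ t : G, Tendsto (fun N : Finset ℕ =>
      (‖(∑ i ∈ N, φ i t * (ψ' i t * F t)) - c * F t‖₊ : ℝ≥0∞) ^ (2:ℝ)) atTop (𝓝 0) := by
    intro t
    have h1 : Tendsto (fun N : Finset ℕ =>
        (∑ i ∈ N, φ i t * (ψ' i t * F t)) - c * F t) atTop (𝓝 0) := by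
      have h0 : Tendsto (fun N : Finset ℕ => ∑ i ∈ N, φ i t * (ψ' i t * F t))
          atTop (𝓝 (c * F t)) := hpsg t
      simpa using h0.sub_const (c * F t)
    have h2 : Tendsto (fun N : Finset ℕ =>
        ‖(∑ i ∈ N, φ i t * (ψ' i t * F t)) - c * F t‖₊) atTop (𝓝 0) := by
      simpa [Function.comp_def] using (continuous_nnnorm.tendsto (0 : ℂ)).comp h1
    have h3 : Tendsto (fun N : Finset ℕ =>
        ((‖(∑ i ∈ N, φ i t * (ψ' i t * F t)) - c * F t‖₊ ^ 2 : ℝ≥0) : ℝ≥0∞))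
        atTop (𝓝 0) := by
      rw [show ((0:ℝ≥0∞)) = ((0:ℝ≥0) : ℝ≥0∞) by simp]
      exact ENNReal.tendsto_coe.mpr (by simpa using h2.pow 2)
    refine h3.congr fun N => ?_
    rw [ENNReal.coe_pow, ← ENNReal.rpow_natCast]
    norm_num
  have hDCT : Tendsto (fun N : Finset ℕ => ∫⁻ t,
      (‖(∑ i ∈ N, φ i t * (ψ' i t * F t)) - c * F t‖₊ : ℝ≥0∞) ^ (2:ℝ) ∂μ)
      atTop (𝓝 0) := by
    have h0 := tendsto_lintegral_filter_of_dominated_convergence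
      (μ := μ) (l := atTop) (f := fun _ => (0:ℝ≥0∞))
      (fun t => (ENNReal.ofReal C * (‖F t‖₊ : ℝ≥0∞)) ^ (2:ℝ))
      (Eventually.of_forall hΦmeas)
      (Eventually.of_forall fun N => ae_of_all μ (hbd N))
      hbound_int (ae_of_all μ hlim)
    simpa using h0
  -- identify the Lp norms
  have hcoesum : ∀ N : Finset ℕ,
      (⇑(∑ i ∈ N, (hgmem i).toLp _) : G → ℂ) =ᵐ[μ]
        fun t => ∑ i ∈ N, φ i t * (ψ' i t * F t) := by
    intro N
    induction N using Finset.induction with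
    | empty => simp only [Finset.sum_empty]; exact Lp.coeFn_zero ℂ 2 μ
    | @insert i N hi ih =>
      rw [Finset.sum_insert hi]
      filter_upwards [Lp.coeFn_add ((hgmem i).toLp _) (∑ j ∈ N, (hgmem j).toLp _),
        (hgmem i).coeFn_toLp, ih] with t h1 h2 h3
      simp only [Finset.sum_insert hi, h1, Pi.add_apply, h2, h3]
  have hnorm_eq : ∀ N : Finset ℕ,
      ‖(∑ i ∈ N, (hgmem i).toLp _) - hhmem.toLp _‖ ^ 2
        = (∫⁻ t, (‖(∑ i ∈ N, φ i t * (ψ' i t * F t)) - c * F t‖₊ : ℝ≥0∞) ^ (2:ℝ) ∂μ).toReal := by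
    intro N
    rw [Lp.norm_def]
    rw [eLpNorm_congr_ae ((Lp.coeFn_sub _ _).trans ((hcoesum N).sub hhmem.coeFn_toLp))]
    rw [eLpNorm_eq_lintegral_rpow_enorm_toReal (by norm_num) (by norm_num)]
    simp only [ENNReal.toReal_ofNat]
    rw [← ENNReal.toReal_rpow, ← Real.rpow_natCast _ 2,
      ← Real.rpow_mul ENNReal.toReal_nonneg]
    norm_num
    rfl
  -- conclude
  rw [HasSum, tendsto_iff_norm_sub_tendsto_zero]
  have h5 : Tendsto (fun N : Finset ℕ =>
      ‖(∑ i ∈ N, (hgmem i).toLp _) - hhmem.toLp _‖ ^ 2) atTop (𝓝 0) := by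
    simp only [hnorm_eq]
    have := (ENNReal.tendsto_toReal (by norm_num : (0:ℝ≥0∞) ≠ ∞)).comp hDCT
    simpa [Function.comp_def] using this
  have h6 := h5.sqrt
  simp only [Real.sqrt_zero] at h6
  refine h6.congr fun N => ?_
  rw [Real.sqrt_sq (norm_nonneg _)]

/-- If `u(x·y⁻¹) = Σ_i φ_i(x)ψ_i(y)` for measurable sequences with
`Σ_i |φ_i(x)|² ≤ C` and `Σ_i |ψ_i(x)|² ≤ C` everywhere, then for every `s ∈ G` and
`f ∈ L²(G,μ)` the series `Σ_i φ_i · (λ(s)(ψ_i · f))` converges in `L²(G,μ)` to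
`u(s) · λ(s)f`, i.e. `Σ_i M_{φ_i} λ(s) M_{ψ_i} = u(s)·λ(s)` with strong convergence. -/
theorem stmt1 {G : Type*} [Group G] [TopologicalSpace G] [IsTopologicalGroup G]
    [LocallyCompactSpace G] [T2Space G] [MeasurableSpace G] [BorelSpace G]
    (μ : Measure G) [μ.IsHaarMeasure] [μ.Regular]
    (u : G → ℂ) (φ ψ : ℕ → G → ℂ)
    (hφm : ∀ i, Measurable (φ i)) (hψm : ∀ i, Measurable (ψ i))
    (C : ℝ) (hC : 0 < C)
    (hφsum : ∀ x, Summable fun i => ‖φ i x‖ ^ 2)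
    (hψsum : ∀ x, Summable fun i => ‖ψ i x‖ ^ 2)
    (hφb : ∀ x, (∑' i, ‖φ i x‖ ^ 2) ≤ C) (hψb : ∀ x, (∑' i, ‖ψ i x‖ ^ 2) ≤ C)
    (hu : ∀ x y : G, u (x * y⁻¹) = ∑' i, φ i x * ψ i y)
    (s : G) (f : Lp ℂ 2 μ) :
    ∃ (hg : ∀ i, MemLp (fun t => φ i t * (ψ i (s⁻¹ * t) * f (s⁻¹ * t))) 2 μ)
      (hh : MemLp (fun t => u s * f (s⁻¹ * t)) 2 μ),
      HasSum (fun i => (hg i).toLp _) (hh.toLp _) := by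
  have hFm : Measurable (fun t => f (s⁻¹ * t)) :=
    (Lp.stronglyMeasurable f).measurable.comp (measurable_const_mul s⁻¹)
  have hF2 : MemLp (fun t => f (s⁻¹ * t)) 2 μ :=
    (Lp.memLp f).comp_measurePreserving (measurePreserving_mul_left μ s⁻¹)
  have hψ'm : ∀ i, Measurable (fun t => ψ i (s⁻¹ * t)) := fun i =>
    (hψm i).comp (measurable_const_mul s⁻¹)
  have hps : ∀ t : G, HasSum (fun i => φ i t * ψ i (s⁻¹ * t)) (u s) := by
    intro t
    have hsm : Summable fun i => φ i t * ψ i (s⁻¹ * t) := by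
      refine Summable.of_norm ?_
      refine Summable.of_nonneg_of_le (fun i => norm_nonneg _) (fun i => ?_)
        ((hφsum t).add (hψsum (s⁻¹ * t)))
      rw [norm_mul]
      nlinarith [sq_nonneg (‖φ i t‖ - ‖ψ i (s⁻¹ * t)‖), norm_nonneg (φ i t),
        norm_nonneg (ψ i (s⁻¹ * t))]
    have h3 : u s = ∑' i, φ i t * ψ i (s⁻¹ * t) := by
      have h4 := hu t (s⁻¹ * t)
      rw [show t * (s⁻¹ * t)⁻¹ = s by group] at h4
      exact h4
    rw [h3]
    exact hsm.hasSum
  exact stmt1_core μ (u s) φ (fun i t => ψ i (s⁻¹ * t)) (fun t => f (s⁻¹ * t))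
    hφm hψ'm hFm hF2 C hC hφsum (fun x => hψsum (s⁻¹ * x)) hφb
    (fun x => hψb (s⁻¹ * x)) hps
end

section
/- Let (Ω,μ) be a measure space, C > 0, and let (φ_i)_{i∈ℕ}, (ψ_i)_{i∈ℕ} be sequences of measurable functions Ω → ℂ such that Σ_i |φ_i(x)|² ≤ C and Σ_i |ψ_i(x)|² ≤ C for μ-almost every x ∈ Ω. Let (S_k)_{k∈ℕ} be a sequence of bounded linear operators on L²(Ω,μ) with sup_k ‖S_k‖ < ∞ which converges to 0 in the weak operator topology, i.e. ⟪S_k h, h'⟫ → 0 for all h, h' ∈ L²(Ω,μ). Then for all f, g ∈ L²(Ω,μ): Σ_i ⟪S_k(ψ_i·f), φ̄_i·g⟫ → 0 as k → ∞, where φ̄_i denotes the pointwise complex conjugate of φ_i. -/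
open MeasureTheory Filter

private lemma normL2_sq (Ω : Type*) [MeasurableSpace Ω] (μ : Measure Ω) (u : Lp ℂ 2 μ) :
    ‖u‖ ^ 2 = ∫ x, ‖u x‖ ^ 2 ∂μ := by
  rw [@norm_sq_eq_re_inner ℂ, MeasureTheory.L2.inner_def,
    ← integral_re (MeasureTheory.L2.integrable_inner u u)]
  refine integral_congr_ae (Eventually.of_forall fun x => ?_)
  simp only [inner_self_eq_norm_sq]

/-- summability of `‖toLp (ψ_i · f)‖ ^ 2` -/
private lemma sq_summable {Ω : Type*} [MeasurableSpace Ω] {μ : Measure Ω}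
    {C : ℝ} {ψ : ℕ → Ω → ℂ}
    (hψ : ∀ᵐ x ∂μ, (Summable fun i => ‖ψ i x‖ ^ 2) ∧ (∑' i, ‖ψ i x‖ ^ 2) ≤ C)
    (f : Lp ℂ 2 μ) (hψf : ∀ i, MemLp (fun x => ψ i x * f x) 2 μ) :
    Summable fun i => ‖(hψf i).toLp _‖ ^ 2 := by
  have hfint : Integrable (fun x => ‖f x‖ ^ 2) μ :=
    (memLp_two_iff_integrable_sq_norm (Lp.aestronglyMeasurable f)).1 (Lp.memLp f)
  have hint : ∀ i, Integrable (fun x => ‖ψ i x * f x‖ ^ 2) μ := fun i =>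
    (memLp_two_iff_integrable_sq_norm (hψf i).1).1 (hψf i)
  have key : ∀ i, ‖(hψf i).toLp _‖ ^ 2 = ∫ x, ‖ψ i x * f x‖ ^ 2 ∂μ := by
    intro i
    rw [normL2_sq]
    refine integral_congr_ae ?_
    filter_upwards [(hψf i).coeFn_toLp] with x hx
    rw [hx]
  refine summable_of_sum_range_le (c := C * ∫ x, ‖f x‖ ^ 2 ∂μ)
    (fun i => sq_nonneg _) fun n => ?_
  simp only [key]
  rw [← integral_finset_sum _ fun i _ => hint i, ← MeasureTheory.integral_const_mul]
  refine integral_mono_ae (integrable_finset_sum _ fun i _ => hint i) (hfint.const_mul C) ?_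
  filter_upwards [hψ] with x hx
  have h1 : ∑ i ∈ Finset.range n, ‖ψ i x * f x‖ ^ 2
      = (∑ i ∈ Finset.range n, ‖ψ i x‖ ^ 2) * ‖f x‖ ^ 2 := by
    rw [Finset.sum_mul]
    exact Finset.sum_congr rfl fun i _ => by rw [norm_mul, mul_pow]
  rw [h1]
  have h2 : ∑ i ∈ Finset.range n, ‖ψ i x‖ ^ 2 ≤ C :=
    le_trans (Summable.sum_le_tsum _ (fun i _ => sq_nonneg _) hx.1) hx.2
  simpa using mul_le_mul_of_nonneg_right h2 (sq_nonneg ‖f x‖)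

/-- If `Σ_i |φ_i(x)|² ≤ C` and `Σ_i |ψ_i(x)|² ≤ C` a.e., and `(S_k)` is a
uniformly bounded sequence of operators on `L²(Ω,μ)` converging to `0` in the weak
operator topology, then for all `f, g ∈ L²(Ω,μ)`,
`Σ_i ⟪S_k(ψ_i·f), φ̄_i·g⟫ → 0` as `k → ∞`. -/
theorem stmt3 {Ω : Type*} [MeasurableSpace Ω] (μ : Measure Ω)
    (C : ℝ) (hC : 0 < C) (φ ψ : ℕ → Ω → ℂ)
    (hφm : ∀ i, Measurable (φ i)) (hψm : ∀ i, Measurable (ψ i))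
    (hφ : ∀ᵐ x ∂μ, (Summable fun i => ‖φ i x‖ ^ 2) ∧ (∑' i, ‖φ i x‖ ^ 2) ≤ C)
    (hψ : ∀ᵐ x ∂μ, (Summable fun i => ‖ψ i x‖ ^ 2) ∧ (∑' i, ‖ψ i x‖ ^ 2) ≤ C)
    (S : ℕ → (Lp ℂ 2 μ →L[ℂ] Lp ℂ 2 μ))
    (hSbdd : ∃ B : ℝ, ∀ k, ‖S k‖ ≤ B)
    (hSwot : ∀ h h' : Lp ℂ 2 μ,
      Tendsto (fun k => (@inner ℂ _ _ (S k h) h' : ℂ)) atTop (nhds 0))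
    (f g : Lp ℂ 2 μ)
    (hψf : ∀ i, MemLp (fun x => ψ i x * f x) 2 μ)
    (hφg : ∀ i, MemLp (fun x => (starRingEnd ℂ) (φ i x) * g x) 2 μ) :
    Tendsto
      (fun k => ∑' i, (@inner ℂ _ _ (S k ((hψf i).toLp _)) ((hφg i).toLp _) : ℂ))
      atTop (nhds 0) := by
  obtain ⟨B, hB⟩ := hSbdd
  have hB0 : 0 ≤ B := le_trans (norm_nonneg _) (hB 0)
  set u : ℕ → Lp ℂ 2 μ := fun i => (hψf i).toLp _ with hu
  set v : ℕ → Lp ℂ 2 μ := fun i => (hφg i).toLp _ with hv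
  have hsu : Summable fun i => ‖u i‖ ^ 2 := sq_summable hψ f hψf
  have hφ' : ∀ᵐ x ∂μ, (Summable fun i => ‖(starRingEnd ℂ) (φ i x)‖ ^ 2) ∧
      (∑' i, ‖(starRingEnd ℂ) (φ i x)‖ ^ 2) ≤ C := by
    filter_upwards [hφ] with x hx; simpa using hx
  have hsv : Summable fun i => ‖v i‖ ^ 2 := sq_summable hφ' g hφg
  have hbound : Summable fun i => B * (‖u i‖ * ‖v i‖) := by
    refine Summable.mul_left B ?_
    refine Summable.of_nonneg_of_le (fun i => mul_nonneg (norm_nonneg _) (norm_nonneg _))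
      (fun i => ?_) ((hsu.add hsv).mul_left (1/2 : ℝ))
    have := two_mul_le_add_sq ‖u i‖ ‖v i‖
    nlinarith [this]
  have := tendsto_tsum_of_dominated_convergence (𝓕 := atTop)
    (f := fun k i => (@inner ℂ _ _ (S k (u i)) (v i) : ℂ))
    (g := fun _ => (0 : ℂ)) hbound (fun i => hSwot (u i) (v i))
    (Eventually.of_forall fun k i => ?_)
  · simpa using this
  · calc ‖(@inner ℂ _ _ (S k (u i)) (v i) : ℂ)‖
        ≤ ‖S k (u i)‖ * ‖v i‖ := norm_inner_le_norm _ _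
      _ ≤ (‖S k‖ * ‖u i‖) * ‖v i‖ :=
        mul_le_mul_of_nonneg_right ((S k).le_opNorm _) (norm_nonneg _)
      _ ≤ B * (‖u i‖ * ‖v i‖) := by
        rw [mul_assoc]
        exact mul_le_mul_of_nonneg_right (hB k) (mul_nonneg (norm_nonneg _) (norm_nonneg _))
end
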